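/- Let 0 ≤ x₀ < 𝔼[γ(X)·X], let 𝒢_ns be the set of measurable g : ℝ → ℝ with 𝔼[γ(X)·g(X)] ≥ x₀ and 0 ≤ g(X) ≤ X almost surely, and set q := inf{VaR_p(g(X)) : g ∈ 𝒢_ns}. If q > 0 and g* ∈ 𝒢_ns satisfies VaR_p(g*(X)) = q, then the budget constraint is binding: 𝔼[γ(X)·g*(X)] = x₀. -/
import Mathlib


open MeasureTheory Filter
open scoped ENNReal Topology Classical Pointwise

noncomputable def VaR {Ω : Type*} [MeasurableSpace Ω] (P : Measure Ω) (p : ℝ) (Y : Ω → ℝ) : ℝ :=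
  sInf {x : ℝ | p ≤ (P {ω | Y ω ≤ x}).toReal}

noncomputable def ES {Ω : Type*} [MeasurableSpace Ω] (P : Measure Ω) (p : ℝ) (Y : Ω → ℝ) : ℝ :=
  (1 - p)⁻¹ * ∫ u in p..(1 : ℝ), VaR P u Y

/-- The probability space is atomless. -/
def Atomless {Ω : Type*} [MeasurableSpace Ω] (P : Measure Ω) : Prop :=
  ∀ s : Set Ω, MeasurableSet s → 0 < P s →
    ∃ t, t ⊆ s ∧ MeasurableSet t ∧ 0 < P t ∧ P t < P s

/-- The (topological) support of a measure on ℝ. -/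
def msupport (μ : Measure ℝ) : Set ℝ :=
  {x | ∀ ε > 0, 0 < μ (Set.Ioo (x - ε) (x + ε))}

/-- The distribution `μ` has a density (w.r.t. Lebesgue measure) which is positive
on the support of `μ`. -/
def HasPositiveDensityOnSupport (μ : Measure ℝ) : Prop :=
  ∃ f : ℝ → ℝ, Measurable f ∧
    μ = MeasureTheory.volume.withDensity (fun x => ENNReal.ofReal (f x)) ∧
    ∀ x ∈ msupport μ, 0 < f x

/-- The distribution `μ` has a density (w.r.t. Lebesgue measure) which is decreasing
(and positive) on the support of `μ`. -/
def HasDecreasingDensityOnSupport (μ : Measure ℝ) : Prop :=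
  ∃ f : ℝ → ℝ, Measurable f ∧
    μ = MeasureTheory.volume.withDensity (fun x => ENNReal.ofReal (f x)) ∧
    AntitoneOn f (msupport μ) ∧ ∀ x ∈ msupport μ, 0 < f x

/-- Membership in the admissible set 𝒢_cm (complete market): measurable `g` with
budget constraint `𝔼[γ(X)·g(X)] ≥ x₀`. -/
def memGcm {Ω : Type*} [MeasurableSpace Ω] (P : Measure Ω) (X : Ω → ℝ) (γ : ℝ → ℝ)
    (x₀ : ℝ) (g : ℝ → ℝ) : Prop :=
  Measurable g ∧ Integrable (fun ω => γ (X ω) * g (X ω)) P ∧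
    x₀ ≤ ∫ ω, γ (X ω) * g (X ω) ∂P

/-- Membership in the admissible set 𝒢_ns (no short-selling):
`𝔼[γ(X)·g(X)] ≥ x₀` and `0 ≤ g(X) ≤ X` a.s. -/
def memGns {Ω : Type*} [MeasurableSpace Ω] (P : Measure Ω) (X : Ω → ℝ) (γ : ℝ → ℝ)
    (x₀ : ℝ) (g : ℝ → ℝ) : Prop :=
  Measurable g ∧ Integrable (fun ω => γ (X ω) * g (X ω)) P ∧
    x₀ ≤ ∫ ω, γ (X ω) * g (X ω) ∂P ∧
    (∀ᵐ ω ∂P, 0 ≤ g (X ω) ∧ g (X ω) ≤ X ω)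

/-- Membership in the admissible set 𝒢_bd (bounded positions):
`𝔼[γ(X)·g(X)] ≥ x₀` and `0 ≤ g(X) ≤ m` a.s. -/
def memGbd {Ω : Type*} [MeasurableSpace Ω] (P : Measure Ω) (X : Ω → ℝ) (γ : ℝ → ℝ)
    (x₀ m : ℝ) (g : ℝ → ℝ) : Prop :=
  Measurable g ∧ Integrable (fun ω => γ (X ω) * g (X ω)) P ∧
    x₀ ≤ ∫ ω, γ (X ω) * g (X ω) ∂P ∧
    (∀ᵐ ω ∂P, 0 ≤ g (X ω) ∧ g (X ω) ≤ m)


lemma VaR_const_mul' {Ω : Type*} [MeasurableSpace Ω] (P : Measure Ω) (p c : ℝ) (hc : 0 < c)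
    (Y : Ω → ℝ) : VaR P p (fun ω => c * Y ω) = c * VaR P p Y := by
  unfold VaR
  have hset : {x : ℝ | p ≤ (P {ω | c * Y ω ≤ x}).toReal}
      = c • {x : ℝ | p ≤ (P {ω | Y ω ≤ x}).toReal} := by
    ext x
    rw [Set.mem_smul_set_iff_inv_smul_mem₀ hc.ne']
    simp only [smul_eq_mul, Set.mem_setOf_eq]
    have : {ω | c * Y ω ≤ x} = {ω | Y ω ≤ c⁻¹ * x} := by
      ext ω
      rw [Set.mem_setOf_eq, Set.mem_setOf_eq, inv_mul_eq_div, le_div_iff₀ hc, mul_comm]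
    rw [this]
  rw [hset, Real.sInf_smul_of_nonneg hc.le, smul_eq_mul]

lemma VaR_nonneg' {Ω : Type*} [MeasurableSpace Ω] (P : Measure Ω) (p : ℝ) (hp : 0 < p)
    (Y : Ω → ℝ) (hY : ∀ᵐ ω ∂P, 0 ≤ Y ω) : 0 ≤ VaR P p Y := by
  apply Real.sInf_nonneg
  intro x hx
  by_contra hxneg
  push_neg at hxneg
  have hzero : P {ω | Y ω ≤ x} = 0 := by
    rw [measure_eq_zero_iff_ae_notMem]
    filter_upwards [hY] with ω hω
    simp only [Set.mem_setOf_eq, not_le]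
    exact lt_of_lt_of_le hxneg hω
  rw [Set.mem_setOf_eq, hzero] at hx
  simp at hx
  linarith

theorem stmt11 {Ω : Type*} [MeasurableSpace Ω] (P : Measure Ω) [IsProbabilityMeasure P]
    (hPatomless : Atomless P)
    (X : Ω → ℝ) (hXmeas : Measurable X) (hXnonneg : ∀ᵐ ω ∂P, 0 ≤ X ω)
    (hXdens : HasPositiveDensityOnSupport (Measure.map X P))
    (γ : ℝ → ℝ) (hγcont : Continuous γ) (hγpos : ∀ x, 0 < γ x)
    (hγint : Integrable (fun ω => γ (X ω)) P)
    (hγ1 : ∫ ω, γ (X ω) ∂P = 1)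
    (hγXint : Integrable (fun ω => γ (X ω) * X ω) P)
    (p : ℝ) (hp : p ∈ Set.Ioo (0 : ℝ) 1)
    (x₀ : ℝ) (hx₀ : 0 ≤ x₀) (hx₀lt : x₀ < ∫ ω, γ (X ω) * X ω ∂P)
    (q : ℝ)
    (hq : q = sInf {v : ℝ | ∃ g : ℝ → ℝ, memGns P X γ x₀ g ∧ v = VaR P p (fun ω => g (X ω))})
    (hqpos : 0 < q) :
    ∀ g : ℝ → ℝ, memGns P X γ x₀ g → VaR P p (fun ω => g (X ω)) = q →
      ∫ ω, γ (X ω) * g (X ω) ∂P = x₀ := by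
  intro g hg hVaR
  by_contra hne
  obtain ⟨hgm, hgint, hgbud, hgae⟩ := hg
  set I := ∫ ω, γ (X ω) * g (X ω) ∂P with hI
  have hIgt : x₀ < I := lt_of_le_of_ne hgbud (fun h => hne h.symm)
  have hIpos : 0 < I := lt_of_le_of_lt hx₀ hIgt
  set c := max (x₀ / I) (1/2) with hcdef
  have hc0 : 0 < c := lt_max_of_lt_right one_half_pos
  have hc1 : c < 1 := max_lt ((div_lt_one hIpos).mpr hIgt) one_half_lt_one
  have hcx : x₀ ≤ c * I := by
    have h1 : x₀ = (x₀ / I) * I := by field_simp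
    rw [h1]
    exact mul_le_mul_of_nonneg_right (le_max_left _ _) hIpos.le
  -- the scaled strategy
  have hrearr : (fun ω => γ (X ω) * (c * g (X ω))) = (fun ω => c * (γ (X ω) * g (X ω))) := by
    funext ω; ring
  have hmem : memGns P X γ x₀ (fun x => c * g x) := by
    refine ⟨(measurable_const.mul hgm), ?_, ?_, ?_⟩
    · rw [hrearr]; exact hgint.const_mul c
    · have : ∫ ω, γ (X ω) * (c * g (X ω)) ∂P = c * I := by
        rw [hrearr, integral_const_mul]
      rw [this]; exact hcx
    · filter_upwards [hgae] with ω hω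
      constructor
      · exact mul_nonneg hc0.le hω.1
      · calc c * g (X ω) ≤ 1 * g (X ω) := mul_le_mul_of_nonneg_right hc1.le hω.1
          _ = g (X ω) := one_mul _
          _ ≤ X ω := hω.2
  have hvval : VaR P p (fun ω => c * g (X ω)) = c * q := by
    rw [VaR_const_mul' P p c hc0, hVaR]
  have hv : c * q ∈ {v : ℝ | ∃ g : ℝ → ℝ, memGns P X γ x₀ g ∧
      v = VaR P p (fun ω => g (X ω))} := ⟨fun x => c * g x, hmem, hvval.symm⟩
  have hbdd : BddBelow {v : ℝ | ∃ g : ℝ → ℝ, memGns P X γ x₀ g ∧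
      v = VaR P p (fun ω => g (X ω))} := by
    refine ⟨0, fun v hv => ?_⟩
    obtain ⟨g', hg', rfl⟩ := hv
    exact VaR_nonneg' P p hp.1 _ ((hg'.2.2.2).mono fun ω h => h.1)
  have hle : q ≤ c * q := by
    have h := csInf_le hbdd hv
    rw [← hq] at h
    exact h
  nlinarith
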